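/- Let p ≥ 0 be an integer, let κ* > 0 satisfy J_p(κ*) = 0, J_p'(κ*) ≠ 0, κ* > p and (κ*)² > p² + 1/8, and let n* > 1. Then there exist ε ∈ (0, n* − 1) and δ > 0 such that for every real n ∈ (n* − ε, n*) and every κ ∈ ℂ with |κ − κ*| < δ, Re(κ) − κ* > Im(κ) > 0 and J_p(κ) ≠ 0, one has Im( −(n·κ² − p²)/(2n·(n − 1)·κ) − κ·J_p'(κ)²/(2n·(n − 1)·J_p(κ)²) ) > 0. -/

import Mathlib

open Complex Real Filter Set
open scoped Topology

/-- Bessel function of the first kind of integer order `p`. -/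
noncomputable def besselJ (p : ℕ) (z : ℂ) : ℂ :=
  ∑' m : ℕ, ((-1 : ℂ) ^ m / ((Nat.factorial m : ℂ) * (Nat.factorial (m + p) : ℂ)))
    * (z / 2) ^ (2 * m + p)

/-- Derivative of the Bessel function. -/
noncomputable def besselJ' (p : ℕ) (z : ℂ) : ℂ := deriv (besselJ p) z

/-- The ITE determinant function `F_p(κ, n)`. -/
noncomputable def Fp (p : ℕ) (κ : ℂ) (n : ℝ) : ℂ :=
  κ * (besselJ' p κ * besselJ p ((Real.sqrt n : ℂ) * κ)
    - (Real.sqrt n : ℂ) * besselJ p κ * besselJ' p ((Real.sqrt n : ℂ) * κ))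

lemma besselJ_differentiable (p : ℕ) : Differentiable ℂ (besselJ p) := by
  intro z₀
  set R : ℝ := ‖z₀‖ + 1 with hR
  have hR0 : (0:ℝ) < R := by positivity
  have key : DifferentiableOn ℂ (fun w : ℂ => ∑' m : ℕ,
      ((-1 : ℂ) ^ m / ((Nat.factorial m : ℂ) * (Nat.factorial (m + p) : ℂ)))
        * (w / 2) ^ (2 * m + p)) (Metric.ball 0 R) := by
    apply differentiableOn_tsum_of_summable_norm
      (u := fun m => (R/2) ^ p * (((R/2)^2) ^ m / (Nat.factorial m : ℝ)))
    · exact (Real.summable_pow_div_factorial ((R/2)^2)).mul_left ((R/2)^p)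
    · intro i
      exact ((differentiable_const _).mul ((differentiable_id.div_const 2).pow _)).differentiableOn
    · exact Metric.isOpen_ball
    · intro m w hw
      have hw' : ‖w‖ ≤ R := by
        have := Metric.mem_ball.mp hw
        simpa [dist_eq_norm] using this.le
      have hc : ‖((-1 : ℂ) ^ m / ((Nat.factorial m : ℂ) * (Nat.factorial (m + p) : ℂ)))‖
          ≤ 1 / (Nat.factorial m : ℝ) := by
        rw [norm_div, norm_pow, norm_neg, norm_one, one_pow, norm_mul,
          Complex.norm_natCast, Complex.norm_natCast]
        rw [div_le_div_iff₀ (by positivity) (by positivity)]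
        have h1 : (1:ℝ) ≤ (Nat.factorial (m+p) : ℝ) := by
          exact_mod_cast Nat.one_le_iff_ne_zero.mpr (Nat.factorial_ne_zero _)
        nlinarith [(Nat.cast_pos (α := ℝ)).mpr (Nat.factorial_pos m)]
      have hpow : ‖(w / 2) ^ (2 * m + p)‖ ≤ (R/2) ^ (2*m+p) := by
        rw [norm_pow]
        apply pow_le_pow_left₀ (norm_nonneg _)
        rw [norm_div]
        simp only [Complex.norm_ofNat]
        linarith
      calc ‖_ * (w / 2) ^ (2 * m + p)‖ ≤ (1 / (Nat.factorial m : ℝ)) * (R/2) ^ (2*m+p) := by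
            rw [norm_mul]
            apply mul_le_mul hc hpow (norm_nonneg _) (by positivity)
        _ = (R/2) ^ p * (((R/2)^2) ^ m / (Nat.factorial m : ℝ)) := by
            rw [pow_add, pow_mul]; ring
  have hz₀ : z₀ ∈ Metric.ball (0:ℂ) R := by
    simp only [Metric.mem_ball, dist_zero_right]
    simpa [hR] using (by linarith : ‖z₀‖ < ‖z₀‖ + 1)
  exact (key.differentiableAt (Metric.isOpen_ball.mem_nhds hz₀))

lemma besselJ_conj (p : ℕ) (z : ℂ) :
    besselJ p ((starRingEnd ℂ) z) = (starRingEnd ℂ) (besselJ p z) := by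
  unfold besselJ
  simp only [starRingEnd_apply]
  rw [tsum_star]
  congr 1
  funext m
  simp only [← starRingEnd_apply, map_mul, map_pow, map_div₀, map_neg, map_one,
    map_natCast, map_ofNat]

lemma conj_hasDerivAt {f : ℂ → ℂ} (hf : ∀ z, f ((starRingEnd ℂ) z) = (starRingEnd ℂ) (f z))
    {w c : ℂ} (h : HasDerivAt f c w) :
    HasDerivAt f ((starRingEnd ℂ) c) ((starRingEnd ℂ) w) := by
  rw [hasDerivAt_iff_tendsto_slope] at h ⊢
  have hmap : map (starRingEnd ℂ) (𝓝[≠] w) = 𝓝[≠] ((starRingEnd ℂ) w) := by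
    have := Complex.conjCLE.toHomeomorph.map_punctured_nhds_eq w
    exact this
  rw [← hmap, tendsto_map'_iff]
  have heq : (slope f ((starRingEnd ℂ) w)) ∘ (starRingEnd ℂ)
      = (starRingEnd ℂ) ∘ slope f w := by
    funext u
    simp only [Function.comp_apply, slope_def_field, hf, ← map_sub, ← map_div₀]
  rw [heq]
  exact (Complex.continuous_conj.tendsto c).comp h

lemma conj_deriv {f : ℂ → ℂ} (hf : ∀ z, f ((starRingEnd ℂ) z) = (starRingEnd ℂ) (f z)) (z : ℂ) :
    deriv f ((starRingEnd ℂ) z) = (starRingEnd ℂ) (deriv f z) := by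
  by_cases hd : DifferentiableAt ℂ f z
  · exact (conj_hasDerivAt hf hd.hasDerivAt).deriv
  · have hd' : ¬ DifferentiableAt ℂ f ((starRingEnd ℂ) z) := by
      intro h'
      apply hd
      have := conj_hasDerivAt hf h'.hasDerivAt
      rw [Complex.conj_conj] at this
      exact this.differentiableAt
    rw [deriv_zero_of_not_differentiableAt hd, deriv_zero_of_not_differentiableAt hd', map_zero]

lemma analyticAt_dslope {f : ℂ → ℂ} {z₀ : ℂ} (hf : AnalyticAt ℂ f z₀) :
    AnalyticAt ℂ (dslope f z₀) z₀ := by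
  obtain ⟨q, hq⟩ := hf
  exact ⟨q.fslope, hq.has_fpower_series_dslope_fslope⟩

set_option maxHeartbeats 2000000 in
/-- positivity of the imaginary part of `d_n(κ)` near `κ*` for `n* > 1`. -/
theorem stmt_11 (p : ℕ) (κs : ℝ) (hκs : 0 < κs)
    (hJ : besselJ p (κs : ℂ) = 0) (hJ' : besselJ' p (κs : ℂ) ≠ 0)
    (hpκ : (p : ℝ) < κs) (hpκ2 : (p : ℝ) ^ 2 + 1 / 8 < κs ^ 2)
    (nst : ℝ) (hnst : 1 < nst) :
    ∃ ε, 0 < ε ∧ ε < nst - 1 ∧ ∃ δ > 0, ∀ n : ℝ, n ∈ Set.Ioo (nst - ε) nst →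
      ∀ κ : ℂ, ‖κ - (κs : ℂ)‖ < δ →
        κ.im < κ.re - κs → 0 < κ.im →
        besselJ p κ ≠ 0 →
        0 < (-(((n : ℂ) * κ ^ 2 - (p : ℂ) ^ 2) / (2 * (n : ℂ) * ((n : ℂ) - 1) * κ))
              - κ * (besselJ' p κ) ^ 2
                / (2 * (n : ℂ) * ((n : ℂ) - 1) * (besselJ p κ) ^ 2)).im := by
  classical
  set J : ℂ → ℂ := besselJ p with hJdef
  have hJdiff : Differentiable ℂ J := besselJ_differentiable p
  have hJsymm : ∀ z, J ((starRingEnd ℂ) z) = (starRingEnd ℂ) (J z) := besselJ_conj p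
  have hJan : AnalyticOnNhd ℂ J Set.univ := hJdiff.differentiableOn.analyticOnNhd isOpen_univ
  have hJ'an : AnalyticAt ℂ (deriv J) ((κs:ℝ):ℂ) := hJan.deriv _ (Set.mem_univ _)
  set A : ℂ := deriv J ((κs:ℝ):ℂ) with hAdef
  have hAne : A ≠ 0 := hJ'
  set g : ℂ → ℂ := dslope J ((κs:ℝ):ℂ) with hgdef
  have hgκs : g ((κs:ℝ):ℂ) = A := dslope_same J _
  have hg_an : AnalyticAt ℂ g ((κs:ℝ):ℂ) := analyticAt_dslope (hJan _ (Set.mem_univ _))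
  have hJfact : ∀ z : ℂ, J z = (z - (κs:ℂ)) * g z := by
    intro z
    have h := sub_smul_dslope J ((κs:ℝ):ℂ) z
    rw [smul_eq_mul] at h
    rw [← hgdef] at h
    rw [h, hJ, sub_zero]
  have hκs_conj : (starRingEnd ℂ) ((κs:ℝ):ℂ) = ((κs:ℝ):ℂ) := Complex.conj_ofReal κs
  have hJ'symm : ∀ z, deriv J ((starRingEnd ℂ) z) = (starRingEnd ℂ) (deriv J z) :=
    conj_deriv hJsymm
  have hAconj : (starRingEnd ℂ) A = A := by
    rw [hAdef, ← hJ'symm ((κs:ℝ):ℂ), hκs_conj]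
  have hgsymm : ∀ z, g ((starRingEnd ℂ) z) = (starRingEnd ℂ) (g z) := by
    intro z
    by_cases hz : z = ((κs:ℝ):ℂ)
    · rw [hz, hκs_conj, hgκs, hAconj]
    · have hz' : (starRingEnd ℂ) z ≠ ((κs:ℝ):ℂ) := by
        intro h
        apply hz
        have h2 := congrArg (starRingEnd ℂ) h
        rwa [Complex.conj_conj, hκs_conj] at h2
      rw [hgdef, dslope_of_ne _ hz', dslope_of_ne _ hz, slope_def_field, slope_def_field,
        hJ, sub_zero, sub_zero, map_div₀, map_sub, hκs_conj, ← hJsymm]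
  set φ : ℂ → ℂ := fun z => z * (deriv J z)^2 / (g z)^2 with hφdef
  have hφκs : φ ((κs:ℝ):ℂ) = ((κs:ℝ):ℂ) := by
    show ((κs:ℝ):ℂ) * (deriv J ((κs:ℝ):ℂ))^2 / (g ((κs:ℝ):ℂ))^2 = ((κs:ℝ):ℂ)
    rw [hgκs, ← hAdef]
    field_simp
  have hφ_an : AnalyticAt ℂ φ ((κs:ℝ):ℂ) := by
    apply AnalyticAt.div
    · exact (analyticAt_id).mul (hJ'an.pow 2)
    · exact hg_an.pow 2
    · rw [hgκs]; exact pow_ne_zero _ hAne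
  have hφsymm : ∀ z, φ ((starRingEnd ℂ) z) = (starRingEnd ℂ) (φ z) := by
    intro z
    show (starRingEnd ℂ) z * (deriv J ((starRingEnd ℂ) z))^2 / (g ((starRingEnd ℂ) z))^2
      = (starRingEnd ℂ) (z * (deriv J z)^2 / (g z)^2)
    rw [map_div₀, map_mul, map_pow, map_pow, ← hJ'symm z, ← hgsymm z]
  set b : ℂ := deriv φ ((κs:ℝ):ℂ) with hbdef
  have hbconj : (starRingEnd ℂ) b = b := by
    rw [hbdef, ← conj_deriv hφsymm ((κs:ℝ):ℂ), hκs_conj]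
  set D : ℂ → ℂ := dslope φ ((κs:ℝ):ℂ) with hDdef
  have hDκs : D ((κs:ℝ):ℂ) = b := dslope_same φ _
  have hD_an : AnalyticAt ℂ D ((κs:ℝ):ℂ) := analyticAt_dslope hφ_an
  set ψ : ℂ → ℂ := dslope D ((κs:ℝ):ℂ) with hψdef
  have hψ_an : AnalyticAt ℂ ψ ((κs:ℝ):ℂ) := analyticAt_dslope hD_an
  have hφ_exp : ∀ z : ℂ, φ z = ((κs:ℝ):ℂ) + b * (z - (κs:ℂ)) + ψ z * (z - (κs:ℂ))^2 := by
    intro z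
    have e1 := sub_smul_dslope φ ((κs:ℝ):ℂ) z
    have e2 := sub_smul_dslope D ((κs:ℝ):ℂ) z
    rw [smul_eq_mul] at e1 e2
    rw [← hDdef] at e1
    rw [← hψdef] at e2
    rw [hφκs] at e1
    rw [hDκs] at e2
    linear_combination (-1 : ℂ) * e1 - (z - ((κs:ℝ):ℂ)) * e2
  have hDsymm : ∀ z, D ((starRingEnd ℂ) z) = (starRingEnd ℂ) (D z) := by
    intro z
    by_cases hz : z = ((κs:ℝ):ℂ)
    · rw [hz, hκs_conj, hDκs, hbconj]
    · have hz' : (starRingEnd ℂ) z ≠ ((κs:ℝ):ℂ) := by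
        intro h
        apply hz
        have h2 := congrArg (starRingEnd ℂ) h
        rwa [Complex.conj_conj, hκs_conj] at h2
      rw [hDdef, dslope_of_ne _ hz', dslope_of_ne _ hz, slope_def_field, slope_def_field,
        hφκs, map_div₀, map_sub, map_sub, hκs_conj, ← hφsymm]
  have hψsymm : ∀ z, z ≠ ((κs:ℝ):ℂ) → ψ ((starRingEnd ℂ) z) = (starRingEnd ℂ) (ψ z) := by
    intro z hz
    have hz' : (starRingEnd ℂ) z ≠ ((κs:ℝ):ℂ) := by
      intro h
      apply hz
      have h2 := congrArg (starRingEnd ℂ) h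
      rwa [Complex.conj_conj, hκs_conj] at h2
    rw [hψdef, dslope_of_ne _ hz', dslope_of_ne _ hz, slope_def_field, slope_def_field,
      hDκs, map_div₀, map_sub, map_sub, hκs_conj, ← hDsymm, hbconj]
  obtain ⟨K, t, ht, hψlip⟩ := (hψ_an.contDiffAt (n := 1)).exists_lipschitzOnWith
  obtain ⟨rt, hrt0, hrtsub⟩ := Metric.mem_nhds_iff.mp ht
  have hK0 : (0:ℝ) ≤ (K:ℝ) := K.coe_nonneg
  set B : ℝ := ‖b‖ with hBdef
  have hB0 : 0 ≤ B := norm_nonneg b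
  set Q : ℝ := 4 * (p:ℝ)^2 / κs^2 with hQdef
  have hQ0 : 0 ≤ Q := by positivity
  set M : ℝ := B + (nst + Q + (K:ℝ)) + 1 with hMdef
  have hM0 : 0 < M := by rw [hMdef]; nlinarith only [hB0, hQ0, hK0, hnst]
  set δ : ℝ := min (min (κs/2) rt) (min 1 (κs / (2 * M))) with hδdef
  have hδ0 : 0 < δ := by
    apply lt_min (lt_min (by linarith only [hκs]) hrt0)
      (lt_min one_pos (div_pos hκs (by linarith only [hM0])))
  refine ⟨(nst-1)/2, by linarith, by linarith, δ, hδ0, ?_⟩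
  rintro n ⟨hn1, hn2⟩ κ hκδ hxy hy hJκ
  have hδa : δ ≤ κs/2 := le_trans (min_le_left _ _) (min_le_left _ _)
  have hδb : δ ≤ rt := le_trans (min_le_left _ _) (min_le_right _ _)
  have hδc : δ ≤ 1 := le_trans (min_le_right _ _) (min_le_left _ _)
  have hδd : δ ≤ κs / (2 * M) := le_trans (min_le_right _ _) (min_le_right _ _)
  set w : ℂ := κ - ((κs:ℝ):ℂ) with hwdef
  set x : ℝ := κ.re - κs with hxdef
  set y : ℝ := κ.im with hydef
  have hwre : w.re = x := by simp [hwdef, hxdef]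
  have hwim : w.im = y := by simp [hwdef, hydef]
  have hy0 : 0 < y := hy
  have hyx : y < x := hxy
  have hx0 : 0 < x := lt_trans hy0 hyx
  have hwabs : ‖w‖ < δ := hκδ
  have hwne : w ≠ 0 := by
    intro h
    rw [h] at hwim
    simp at hwim
    linarith
  have hκne : κ ≠ ((κs:ℝ):ℂ) := by
    intro h
    apply hwne
    rw [hwdef, h, sub_self]
  have hxabs : x ≤ ‖w‖ := by rw [← hwre]; exact Complex.re_le_norm w
  have hxδ : x < δ := lt_of_le_of_lt hxabs hwabs
  have hn1' : 1 < n := by linarith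
  have hn0 : 0 < n := by linarith
  -- |κ| ≥ κs/2
  have hκabs : κs/2 ≤ ‖κ‖ := by
    have h1 : ‖((κs:ℝ):ℂ)‖ = κs := by
      rw [Complex.norm_real, Real.norm_eq_abs]; exact abs_of_pos hκs
    have h2 : ((κs:ℝ):ℂ) = κ - w := by rw [hwdef]; ring
    have h3 : ‖κ - w‖ ≤ ‖κ‖ + ‖w‖ := by
      exact norm_sub_le κ w
    rw [h2] at h1
    linarith
  have hκ0 : κ ≠ 0 := by
    intro h
    rw [h] at hκabs
    simp at hκabs
    linarith
  have hnsκ : κs^2/4 ≤ Complex.normSq κ := by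
    rw [Complex.normSq_eq_norm_sq]
    nlinarith only [hκabs, hκs, norm_nonneg κ]
  have hnsκ0 : 0 < Complex.normSq κ := Complex.normSq_pos.mpr hκ0
  have hnsw : Complex.normSq w = x^2 + y^2 := by
    rw [Complex.normSq_apply, hwre, hwim]; ring
  have hnsw0 : 0 < Complex.normSq w := by rw [hnsw]; positivity
  have hnswle : Complex.normSq w ≤ 2 * x^2 := by rw [hnsw]; nlinarith only [hyx, hy0]
  -- Lipschitz bound on Im ψ
  have hκt : κ ∈ t := by
    apply hrtsub
    rw [Metric.mem_ball, Complex.dist_eq]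
    calc ‖κ - ((κs:ℝ):ℂ)‖ < δ := hκδ
      _ ≤ rt := hδb
  have hκct : (starRingEnd ℂ) κ ∈ t := by
    apply hrtsub
    rw [Metric.mem_ball, Complex.dist_eq]
    have : (starRingEnd ℂ) κ - ((κs:ℝ):ℂ) = (starRingEnd ℂ) (κ - ((κs:ℝ):ℂ)) := by
      rw [map_sub, hκs_conj]
    rw [this, Complex.norm_conj]
    calc ‖κ - ((κs:ℝ):ℂ)‖ < δ := hκδ
      _ ≤ rt := hδb
  have hψim : |(ψ κ).im| ≤ (K:ℝ) * y := by
    have h1 := hψlip.dist_le_mul κ hκt ((starRingEnd ℂ) κ) hκct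
    rw [hψsymm κ hκne] at h1
    have h3 : dist (ψ κ) ((starRingEnd ℂ) (ψ κ)) = 2 * |(ψ κ).im| := by
      rw [Complex.dist_eq, Complex.sub_conj]
      rw [norm_mul, Complex.norm_I, Complex.norm_real, Real.norm_eq_abs]
      rw [abs_mul]
      simp [abs_of_nonneg]
    have h4 : dist κ ((starRingEnd ℂ) κ) = 2 * y := by
      rw [Complex.dist_eq, Complex.sub_conj]
      rw [norm_mul, Complex.norm_I, Complex.norm_real, Real.norm_eq_abs]
      rw [abs_mul]
      rw [abs_of_pos hy0, abs_of_pos (by norm_num : (0:ℝ) < 2)]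
      ring
    rw [h3, h4] at h1
    linarith
  -- key algebraic identity
  have hJκ' : J κ ≠ 0 := hJκ
  have hgκ : g κ ≠ 0 := by
    intro h
    apply hJκ'
    have h1 : J κ = w * g κ := by rw [hJfact κ, ← hwdef]
    rw [h1, h, mul_zero]
  have hJfw : J κ = w * g κ := by rw [hJfact κ, ← hwdef]
  have hφκ_exp : φ κ = ((κs:ℝ):ℂ) + b * w + ψ κ * w^2 := by
    have := hφ_exp κ
    rw [← hwdef] at this
    exact this
  have h4 : κ * (deriv J κ)^2 = (((κs:ℝ):ℂ) + b * w + ψ κ * w^2) * (g κ)^2 := by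
    have h2 : φ κ * (g κ)^2 = κ * (deriv J κ)^2 := by
      show (κ * (deriv J κ)^2 / (g κ)^2) * (g κ)^2 = κ * (deriv J κ)^2
      field_simp
    rw [← h2, hφκ_exp]
  have key : κ * (deriv J κ)^2 / (J κ)^2
      = ((κs:ℝ):ℂ)/w^2 + b/w + ψ κ := by
    rw [hJfw, div_eq_iff (pow_ne_zero _ (mul_ne_zero hwne hgκ)), h4]
    field_simp
  -- rewrite the target expression
  set r : ℝ := 2 * n * (n - 1) with hrdef
  have hr0 : 0 < r := by rw [hrdef]; nlinarith only [hn1']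
  have hrne : (r:ℂ) ≠ 0 := Complex.ofReal_ne_zero.mpr (ne_of_gt hr0)
  set G : ℂ := -((n:ℂ)*κ) + (p:ℂ)^2 * κ⁻¹ - ((κs:ℝ):ℂ)/w^2 - b/w - ψ κ with hGdef
  have hbj' : besselJ' p κ = deriv J κ := rfl
  have hc2 : (2 * (n:ℂ) * ((n:ℂ) - 1)) = (r:ℂ) := by
    rw [hrdef]; push_cast; ring
  have hEG : (-(((n : ℂ) * κ ^ 2 - (p : ℂ) ^ 2) / (2 * (n : ℂ) * ((n : ℂ) - 1) * κ))
              - κ * (besselJ' p κ) ^ 2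
                / (2 * (n : ℂ) * ((n : ℂ) - 1) * (J κ) ^ 2)) = (r:ℂ)⁻¹ * G := by
    rw [hbj', hc2]
    have e2 : -(((n : ℂ) * κ ^ 2 - (p : ℂ) ^ 2) / κ) - κ * (deriv J κ) ^ 2 / (J κ) ^ 2 = G := by
      rw [key, hGdef]
      field_simp
      ring
    rw [← e2]
    have hJ2 : (J κ)^2 ≠ 0 := pow_ne_zero _ hJκ'
    field_simp
  rw [hEG]
  have him : ((r:ℂ)⁻¹ * G).im = r⁻¹ * G.im := by
    rw [← Complex.ofReal_inv, Complex.mul_im, Complex.ofReal_re, Complex.ofReal_im]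
    ring
  rw [him]
  apply mul_pos (inv_pos.mpr hr0)
  -- compute Im G
  have i1 : ((n:ℂ)*κ).im = n * y := by
    rw [Complex.mul_im, Complex.ofReal_re, Complex.ofReal_im, hydef]; ring
  have i2 : ((p:ℂ)^2 * κ⁻¹).im = (p:ℝ)^2 * (-y / Complex.normSq κ) := by
    have hp2 : ((p:ℕ):ℂ)^2 = ((((p:ℝ))^2 : ℝ) : ℂ) := by push_cast; ring
    rw [hp2, Complex.mul_im, Complex.ofReal_re, Complex.ofReal_im, Complex.inv_im, hydef]; ring
  have hw2im : (w^2).im = 2*x*y := by rw [sq, Complex.mul_im, hwre, hwim]; ring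
  have hw2ns : Complex.normSq (w^2) = (Complex.normSq w)^2 := by exact map_pow Complex.normSq w 2
  have i3 : (((κs:ℝ):ℂ)/w^2).im = κs * (-(2*x*y) / (Complex.normSq w)^2) := by
    rw [div_eq_mul_inv, Complex.mul_im, Complex.ofReal_re, Complex.ofReal_im,
      Complex.inv_im, hw2im, hw2ns]
    ring
  have hbim : b.im = 0 := Complex.conj_eq_iff_im.mp hbconj
  have i4 : (b/w).im = b.re * (-y / Complex.normSq w) := by
    rw [div_eq_mul_inv, Complex.mul_im, Complex.inv_im, Complex.inv_re, hwim, hbim]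
    ring
  have i5 : G.im = -(n*y) + (p:ℝ)^2 * (-y / Complex.normSq κ)
      - κs * (-(2*x*y) / (Complex.normSq w)^2) - b.re * (-y / Complex.normSq w) - (ψ κ).im := by
    rw [hGdef, Complex.sub_im, Complex.sub_im, Complex.sub_im, Complex.add_im,
      Complex.neg_im, i1, i2, i3, i4]
  rw [i5]
  -- the numeric estimate
  have hM2x : 2 * M * x ≤ κs := by
    have : x < κs / (2*M) := lt_of_lt_of_le hxδ hδd
    rw [lt_div_iff₀ (by linarith only [hM0] : (0:ℝ) < 2*M)] at this
    linarith
  have hA1 : M * (y / x^2) ≤ κs * ((2*x*y) / (Complex.normSq w)^2) := by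
    have hns2 : (Complex.normSq w)^2 ≤ 4 * x^4 := by nlinarith only [hnswle, hnsw0.le]
    have e1 : M * (y/x^2) = M * y / x^2 := by ring
    have e2 : κs * ((2*x*y)/(Complex.normSq w)^2)
        = κs * (2*x*y) / (Complex.normSq w)^2 := by ring
    rw [e1, e2, div_le_div_iff₀ (pow_pos hx0 2) (pow_pos hnsw0 2)]
    nlinarith only [mul_le_mul_of_nonneg_left hns2 (mul_nonneg hM0.le hy0.le),
      mul_le_mul_of_nonneg_right hM2x
        (mul_nonneg (by nlinarith only [pow_pos hx0 3] : (0:ℝ) ≤ 2*x^3) hy0.le)]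
  have hx2nsw : x^2 ≤ Complex.normSq w := by rw [hnsw]; nlinarith only [sq_nonneg y]
  have hyns : y / Complex.normSq w ≤ y / x^2 := by
    rw [div_le_div_iff₀ hnsw0 (pow_pos hx0 2)]
    nlinarith only [mul_le_mul_of_nonneg_left hx2nsw hy0.le]
  have hbre : -B ≤ b.re := by
    have h1 : |b.re| ≤ B := by rw [hBdef]; exact Complex.abs_re_le_norm b
    exact (abs_le.mp h1).1
  have hA2 : -(B * (y/x^2)) ≤ b.re * (y / Complex.normSq w) := by
    have h1 : (-B) * (y / Complex.normSq w) ≤ b.re * (y / Complex.normSq w) :=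
      mul_le_mul_of_nonneg_right hbre (div_nonneg hy0.le hnsw0.le)
    have h2 : B * (y / Complex.normSq w) ≤ B * (y/x^2) :=
      mul_le_mul_of_nonneg_left hyns hB0
    nlinarith only [h1, h2]
  have hA3 : (p:ℝ)^2 * (y / Complex.normSq κ) ≤ Q * y := by
    have h1 : y / Complex.normSq κ ≤ 4*y/κs^2 := by
      rw [div_le_div_iff₀ hnsκ0 (pow_pos hκs 2)]
      nlinarith only [mul_le_mul_of_nonneg_left hnsκ hy0.le]
    calc (p:ℝ)^2 * (y/Complex.normSq κ) ≤ (p:ℝ)^2 * (4*y/κs^2) :=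
          mul_le_mul_of_nonneg_left h1 (by positivity)
      _ = Q * y := by rw [hQdef]; ring
  have hx21 : x^2 ≤ 1 := by nlinarith only [hxδ, hδc, hx0]
  have hyy : y ≤ y / x^2 := by
    rw [le_div_iff₀ (pow_pos hx0 2)]
    nlinarith only [mul_le_mul_of_nonneg_left hx21 hy0.le]
  have hA5 : (nst + Q + (K:ℝ) + 1) * y ≤ (nst + Q + (K:ℝ) + 1) * (y / x^2) :=
    mul_le_mul_of_nonneg_left hyy (by nlinarith only [hnst, hQ0, hK0])
  have hA6 : n * y ≤ nst * y := mul_le_mul_of_nonneg_right hn2.le hy0.le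
  have hA4 : (ψ κ).im ≤ (K:ℝ) * y := (abs_le.mp hψim).2
  have hA1' : (B + (nst + Q + (K:ℝ)) + 1) * (y / x^2)
      ≤ κs * ((2*x*y) / (Complex.normSq w)^2) := by
    rw [← hMdef]; exact hA1
  clear_value B Q M x y w
  ring_nf at hA1' hA2 hA3 hA4 hA5 hA6 ⊢
  linarith only [hA1', hA2, hA3, hA4, hA5, hA6, hy0]
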